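/- arXiv:2212.10110 — 4 statements merged into one kernel-verified Lean document; each statement's English description precedes it below -/
import Mathlib

section
/- Let E and E' be real Banach spaces with cones P ⊆ E and P' ⊆ E' having nonempty interior, and let (X, d_X) be a quasi cone metric space over (E, P) and (Y, d_Y) a quasi cone metric space over (E', P'). If f : X → Y is uniformly continuous, then f is arithmetic ff-continuous. -/
open Pointwise

/-- A cone in a real Banach space `E`: nonempty, closed, not `{0}`, closed under
nonnegative combinations, and `P ∩ (-P) = {0}`. -/
def IsCone {E : Type*} [NormedAddCommGroup E] [NormedSpace ℝ E] (P : Set E) : Prop :=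
  P.Nonempty ∧ IsClosed P ∧ P ≠ {0} ∧
    (∀ x ∈ P, ∀ y ∈ P, ∀ s t : ℝ, 0 ≤ s → 0 ≤ t → s • x + t • y ∈ P) ∧
    P ∩ (-P) = {0}

/-- `a ≤ b` with respect to the cone `P`, i.e. `b - a ∈ P`. -/
def coneLE {E : Type*} [NormedAddCommGroup E] (P : Set E) (a b : E) : Prop :=
  b - a ∈ P

/-- `a ≪ b` with respect to the cone `P`, i.e. `b - a ∈ interior P`. -/
def coneLT {E : Type*} [NormedAddCommGroup E] (P : Set E) (a b : E) : Prop :=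
  b - a ∈ interior P

/-- `(X, d)` is a quasi cone metric space over `(E, P)`. -/
def IsQuasiConeMetric {E X : Type*} [NormedAddCommGroup E]
    (P : Set E) (d : X → X → E) : Prop :=
  (∀ x y : X, coneLE P 0 (d x y)) ∧
  (∀ x y : X, d x y = 0 ↔ x = y) ∧
  (∀ x y z : X, coneLE P (d x y) (d x z + d z y))

/-- A sequence (indexed by positive integers) is forward arithmetic convergent. -/
def ForwardArithConv {E X : Type*} [NormedAddCommGroup E]
    (P : Set E) (d : X → X → E) (x : ℕ+ → X) : Prop :=
  ∀ u : E, coneLT P 0 u → ∃ N : ℕ+, ∀ n m : ℕ+,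
    N ≤ PNat.gcd n m → coneLT P (d (x (PNat.gcd n m)) (x n)) u

/-- A sequence (indexed by positive integers) is backward arithmetic convergent. -/
def BackwardArithConv {E X : Type*} [NormedAddCommGroup E]
    (P : Set E) (d : X → X → E) (x : ℕ+ → X) : Prop :=
  ∀ u : E, coneLT P 0 u → ∃ N : ℕ+, ∀ n m : ℕ+,
    N ≤ PNat.gcd n m → coneLT P (d (x n) (x (PNat.gcd n m))) u

/-- A sequence forward converges to `x₀`. -/
def ForwardConvTo {E X : Type*} [NormedAddCommGroup E]
    (P : Set E) (d : X → X → E) (x : ℕ+ → X) (x₀ : X) : Prop :=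
  ∀ u : E, coneLT P 0 u → ∃ N : ℕ+, ∀ n : ℕ+, N ≤ n → coneLT P (d x₀ (x n)) u

/-- A sequence backward converges to `x₀`. -/
def BackwardConvTo {E X : Type*} [NormedAddCommGroup E]
    (P : Set E) (d : X → X → E) (x : ℕ+ → X) (x₀ : X) : Prop :=
  ∀ u : E, coneLT P 0 u → ∃ N : ℕ+, ∀ n : ℕ+, N ≤ n → coneLT P (d (x n) x₀) u

/-- Forward convergence is equivalent to backward convergence in `(X, d)`. -/
def FwdEqBwdConv {E X : Type*} [NormedAddCommGroup E]
    (P : Set E) (d : X → X → E) : Prop :=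
  ∀ (x : ℕ+ → X) (x₀ : X), ForwardConvTo P d x x₀ ↔ BackwardConvTo P d x x₀

/-- `f : X → Y` is arithmetic ff-continuous. -/
def ArithFFContinuous {E E' X Y : Type*} [NormedAddCommGroup E] [NormedAddCommGroup E']
    (P : Set E) (P' : Set E') (dX : X → X → E) (dY : Y → Y → E') (f : X → Y) : Prop :=
  ∀ x : ℕ+ → X, ForwardArithConv P dX x → ForwardArithConv P' dY (fun n => f (x n))

/-- `f : X → Y` is arithmetic fb-continuous. -/
def ArithFBContinuous {E E' X Y : Type*} [NormedAddCommGroup E] [NormedAddCommGroup E']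
    (P : Set E) (P' : Set E') (dX : X → X → E) (dY : Y → Y → E') (f : X → Y) : Prop :=
  ∀ x : ℕ+ → X, ForwardArithConv P dX x → BackwardArithConv P' dY (fun n => f (x n))

/-- `f : X → Y` is uniformly continuous between quasi cone metric spaces. -/
def QCMUniformlyContinuous {E E' X Y : Type*} [NormedAddCommGroup E] [NormedAddCommGroup E']
    (P : Set E) (P' : Set E') (dX : X → X → E) (dY : Y → Y → E') (f : X → Y) : Prop :=
  ∀ u' : E', coneLT P' 0 u' → ∃ u : E, coneLT P 0 u ∧
    ∀ x y : X, coneLT P (dX x y) u → coneLT P' (dY (f x) (f y)) u'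

/-- A sequence of functions `fₙ : X → Y` is forward arithmetic convergent. -/
def FwdArithConvFunSeq {E' X Y : Type*} [NormedAddCommGroup E']
    (P' : Set E') (dY : Y → Y → E') (fn : ℕ+ → X → Y) : Prop :=
  ∀ u' : E', coneLT P' 0 u' → ∃ n₀ : ℕ+, ∀ (x : X) (n m : ℕ+),
    n₀ ≤ PNat.gcd n m → coneLT P' (dY (fn (PNat.gcd n m) x) (fn n x)) u'

/-- A sequence of functions `fₙ : X → Y` is backward arithmetic convergent. -/
def BwdArithConvFunSeq {E' X Y : Type*} [NormedAddCommGroup E']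
    (P' : Set E') (dY : Y → Y → E') (fn : ℕ+ → X → Y) : Prop :=
  ∀ u' : E', coneLT P' 0 u' → ∃ n₀ : ℕ+, ∀ (x : X) (n m : ℕ+),
    n₀ ≤ PNat.gcd n m → coneLT P' (dY (fn n x) (fn (PNat.gcd n m) x)) u'

/-- `fₙ` forward converges uniformly to `f`. -/
def UnifFwdConv {E' X Y : Type*} [NormedAddCommGroup E']
    (P' : Set E') (dY : Y → Y → E') (fn : ℕ+ → X → Y) (f : X → Y) : Prop :=
  ∀ u' : E', coneLT P' 0 u' → ∃ N : ℕ+, ∀ n : ℕ+, N ≤ n → ∀ x : X,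
    coneLT P' (dY (f x) (fn n x)) u'

/-- `f : X → Y` is forward (cAC)-continuous. -/
def ForwardCACContinuous {E E' X Y : Type*} [NormedAddCommGroup E] [NormedAddCommGroup E']
    (P : Set E) (P' : Set E') (dX : X → X → E) (dY : Y → Y → E') (f : X → Y) : Prop :=
  ∀ (x : ℕ+ → X) (x₀ : X), ForwardConvTo P dX x x₀ →
    ForwardArithConv P' dY (fun n => f (x n))

/-- `B` is forward arithmetic compact. -/
def ForwardArithCompact {E X : Type*} [NormedAddCommGroup E]
    (P : Set E) (d : X → X → E) (B : Set X) : Prop :=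
  ∀ x : ℕ+ → X, (∀ n, x n ∈ B) → ∃ φ : ℕ+ → ℕ+, StrictMono φ ∧
    ForwardArithConv P d (fun n => x (φ n))

/-- `B` is backward arithmetic compact. -/
def BackwardArithCompact {E X : Type*} [NormedAddCommGroup E]
    (P : Set E) (d : X → X → E) (B : Set X) : Prop :=
  ∀ x : ℕ+ → X, (∀ n, x n ∈ B) → ∃ φ : ℕ+ → ℕ+, StrictMono φ ∧
    BackwardArithConv P d (fun n => x (φ n))

theorem unifCont_arithFFContinuous {E E' X Y : Type*}
    [NormedAddCommGroup E] [NormedSpace ℝ E] [CompleteSpace E]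
    [NormedAddCommGroup E'] [NormedSpace ℝ E'] [CompleteSpace E']
    (P : Set E) (P' : Set E')
    (hP : IsCone P) (hP' : IsCone P')
    (hPint : (interior P).Nonempty) (hP'int : (interior P').Nonempty)
    (dX : X → X → E) (dY : Y → Y → E')
    (hdX : IsQuasiConeMetric P dX) (hdY : IsQuasiConeMetric P' dY)
    (f : X → Y) (hf : QCMUniformlyContinuous P P' dX dY f) :
    ArithFFContinuous P P' dX dY f := by
  intro x hx u' hu'
  obtain ⟨u, hu, h⟩ := hf u' hu'
  obtain ⟨N, hN⟩ := hx u hu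
  exact ⟨N, fun n m hnm => h _ _ (hN n m hnm)⟩
end

section
/- Let (X, d_X) be a quasi cone metric space over (E, P) and (Y, d_Y) a quasi cone metric space over (E', P'). Let {f_n} be a forward arithmetic convergent sequence of functions from X to Y, let x₀ ∈ X, and let {y_n} be a sequence in Y such that: (i) for every u ∈ E with 0 ≪ u there exists x ∈ X with d_X(x₀, x) ≪ u; and (ii) for each positive integer n and every u' ∈ E' with 0 ≪ u' there exists u ∈ E with 0 ≪ u such that every x ∈ X with d_X(x₀, x) ≪ u satisfies both d_Y(y_n, f_n(x)) ≪ u' and d_Y(f_n(x), y_n) ≪ u' (i.e., f_n(x) tends to y_n as x tends to x₀). Then the sequence {y_n} is forward arithmetic convergent in Y. -/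
open Pointwise

section Aux
variable {F : Type*} [NormedAddCommGroup F] [NormedSpace ℝ F] {P : Set F}

lemma cone_add (hP : IsCone P) {a b : F} (ha : a ∈ P) (hb : b ∈ P) : a + b ∈ P := by
  have := hP.2.2.2.1 a ha b hb 1 1 zero_le_one zero_le_one
  simpa using this

lemma interior_add_cone (hP : IsCone P) {a b : F} (ha : a ∈ interior P) (hb : b ∈ P) :
    a + b ∈ interior P := by
  have hmap : IsOpenMap (fun z : F => z + b) :=
    (Homeomorph.addRight b).isOpenMap
  have hopen : IsOpen ((fun z : F => z + b) '' interior P) := hmap _ isOpen_interior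
  have hsub : ((fun z : F => z + b) '' interior P) ⊆ P := by
    rintro _ ⟨z, hz, rfl⟩
    exact cone_add hP (interior_subset hz) hb
  exact interior_mono hsub (hopen.subset_interior_iff.mpr (le_refl _) ⟨a, ha, rfl⟩)

lemma cone_smul (hP : IsCone P) {a : F} (ha : a ∈ P) {t : ℝ} (ht : 0 ≤ t) : t • a ∈ P := by
  have := hP.2.2.2.1 a ha a ha t 0 ht le_rfl
  simpa using this

lemma interior_smul_cone (hP : IsCone P) {a : F} (ha : a ∈ interior P) {t : ℝ} (ht : 0 < t) :
    t • a ∈ interior P := by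
  have hmap : IsOpenMap (fun z : F => t • z) := isOpenMap_smul₀ (ne_of_gt ht)
  have hopen : IsOpen ((fun z : F => t • z) '' interior P) := hmap _ isOpen_interior
  have hsub : ((fun z : F => t • z) '' interior P) ⊆ P := by
    rintro _ ⟨z, hz, rfl⟩
    exact cone_smul hP (interior_subset hz) ht.le
  exact interior_mono hsub (hopen.subset_interior_iff.mpr (le_refl _) ⟨a, ha, rfl⟩)

lemma cone_directed (hP : IsCone P) {u1 u2 : F} (h1 : u1 ∈ interior P) (h2 : u2 ∈ interior P) :
    ∃ u, u ∈ interior P ∧ u1 - u ∈ P ∧ u2 - u ∈ P := by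
  obtain ⟨e, he⟩ : (interior P).Nonempty := ⟨u1, h1⟩
  have hc : Filter.Tendsto (fun t : ℝ => t • e) (nhds 0) (nhds 0) := by
    have : Continuous fun t : ℝ => t • e := by continuity
    simpa using this.tendsto 0
  have t1 : Filter.Tendsto (fun t : ℝ => u1 - t • e) (nhds 0) (nhds u1) := by
    simpa using Filter.Tendsto.sub (tendsto_const_nhds (x := u1)) hc
  have t2 : Filter.Tendsto (fun t : ℝ => u2 - t • e) (nhds 0) (nhds u2) := by
    simpa using Filter.Tendsto.sub (tendsto_const_nhds (x := u2)) hc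
  have e1 : ∀ᶠ t in nhdsWithin (0 : ℝ) (Set.Ioi 0), u1 - t • e ∈ interior P :=
    (tendsto_nhdsWithin_of_tendsto_nhds t1) (isOpen_interior.mem_nhds h1)
  have e2 : ∀ᶠ t in nhdsWithin (0 : ℝ) (Set.Ioi 0), u2 - t • e ∈ interior P :=
    (tendsto_nhdsWithin_of_tendsto_nhds t2) (isOpen_interior.mem_nhds h2)
  obtain ⟨t, ht1, ht2, ht0⟩ := (e1.and (e2.and (eventually_mem_nhdsWithin))).exists
  exact ⟨t • e, interior_smul_cone hP he ht0, interior_subset ht1, interior_subset ht2⟩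

end Aux

theorem fwdArithConvFunSeq_limit {E E' X Y : Type*}
    [NormedAddCommGroup E] [NormedSpace ℝ E] [CompleteSpace E]
    [NormedAddCommGroup E'] [NormedSpace ℝ E'] [CompleteSpace E']
    (P : Set E) (P' : Set E')
    (hP : IsCone P) (hP' : IsCone P')
    (hPint : (interior P).Nonempty) (hP'int : (interior P').Nonempty)
    (dX : X → X → E) (dY : Y → Y → E')
    (hdX : IsQuasiConeMetric P dX) (hdY : IsQuasiConeMetric P' dY)
    (fn : ℕ+ → X → Y) (hfn : FwdArithConvFunSeq P' dY fn)
    (x₀ : X) (y : ℕ+ → Y)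
    (happrox : ∀ u : E, coneLT P 0 u → ∃ x : X, coneLT P (dX x₀ x) u)
    (hlim : ∀ n : ℕ+, ∀ u' : E', coneLT P' 0 u' → ∃ u : E, coneLT P 0 u ∧
      ∀ x : X, coneLT P (dX x₀ x) u →
        coneLT P' (dY (y n) (fn n x)) u' ∧ coneLT P' (dY (fn n x) (y n)) u') :
    ForwardArithConv P' dY y := by

  intro u' hu'
  rw [coneLT, sub_zero] at hu'
  set u3 : E' := (3 : ℝ)⁻¹ • u' with hu3def
  have hu3 : u3 ∈ interior P' := interior_smul_cone hP' hu' (by norm_num)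
  have hsum : u3 + u3 + u3 = u' := by
    rw [hu3def]; module
  obtain ⟨n₀, hn₀⟩ := hfn u3 (by rw [coneLT, sub_zero]; exact hu3)
  refine ⟨n₀, fun n m hk => ?_⟩
  set k : ℕ+ := PNat.gcd n m with hkdef
  obtain ⟨u1, hu1, H1⟩ := hlim k u3 (by rw [coneLT, sub_zero]; exact hu3)
  obtain ⟨u2, hu2, H2⟩ := hlim n u3 (by rw [coneLT, sub_zero]; exact hu3)
  rw [coneLT, sub_zero] at hu1 hu2
  obtain ⟨u, hu, hle1, hle2⟩ := cone_directed hP hu1 hu2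
  obtain ⟨x, hx⟩ := happrox u (by rw [coneLT, sub_zero]; exact hu)
  rw [coneLT] at hx
  have hx1 : coneLT P (dX x₀ x) u1 := by
    rw [coneLT]
    have : (u - dX x₀ x) + (u1 - u) ∈ interior P := interior_add_cone hP hx hle1
    convert this using 1; abel
  have hx2 : coneLT P (dX x₀ x) u2 := by
    rw [coneLT]
    have : (u - dX x₀ x) + (u2 - u) ∈ interior P := interior_add_cone hP hx hle2
    convert this using 1; abel
  have hA : u3 - dY (y k) (fn k x) ∈ interior P' := (H1 x hx1).1
  have hC : u3 - dY (fn n x) (y n) ∈ interior P' := (H2 x hx2).2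
  have hB : u3 - dY (fn k x) (fn n x) ∈ interior P' := hn₀ x n m hk
  have ht1 : dY (y k) (fn k x) + dY (fn k x) (y n) - dY (y k) (y n) ∈ P' :=
    hdY.2.2 (y k) (y n) (fn k x)
  have ht2 : dY (fn k x) (fn n x) + dY (fn n x) (y n) - dY (fn k x) (y n) ∈ P' :=
    hdY.2.2 (fn k x) (y n) (fn n x)
  have htri : dY (y k) (fn k x) + dY (fn k x) (fn n x) + dY (fn n x) (y n)
      - dY (y k) (y n) ∈ P' := by
    have := cone_add hP' ht1 ht2
    convert this using 1; abel
  have hint : u' - (dY (y k) (fn k x) + dY (fn k x) (fn n x) + dY (fn n x) (y n))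
      ∈ interior P' := by
    have := interior_add_cone hP'
      (interior_add_cone hP' hA (interior_subset hB)) (interior_subset hC)
    rw [← hsum]
    convert this using 1; abel
  rw [coneLT]
  have := interior_add_cone hP' hint htri
  convert this using 1; abel
end

section
/- Let (X, d_X) be a quasi cone metric space over (E, P) and (Y, d_Y) a quasi cone metric space over (E', P'). Let {f_n} be a backward arithmetic convergent sequence of functions from X to Y, let x₀ ∈ X, and let {y_n} be a sequence in Y such that: (i) for every u ∈ E with 0 ≪ u there exists x ∈ X with d_X(x₀, x) ≪ u; and (ii) for each positive integer n and every u' ∈ E' with 0 ≪ u' there exists u ∈ E with 0 ≪ u such that every x ∈ X with d_X(x₀, x) ≪ u satisfies both d_Y(y_n, f_n(x)) ≪ u' and d_Y(f_n(x), y_n) ≪ u' (i.e., f_n(x) tends to y_n as x tends to x₀). Then the sequence {y_n} is backward arithmetic convergent in Y. -/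
open Pointwise

lemma IsCone.add_mem' {E : Type*} [NormedAddCommGroup E] [NormedSpace ℝ E]
    {P : Set E} (hP : IsCone P) {a b : E} (ha : a ∈ P) (hb : b ∈ P) : a + b ∈ P := by
  have := hP.2.2.2.1 a ha b hb 1 1 zero_le_one zero_le_one
  simpa using this

lemma IsCone.smul_mem' {E : Type*} [NormedAddCommGroup E] [NormedSpace ℝ E]
    {P : Set E} (hP : IsCone P) {t : ℝ} (ht : 0 ≤ t) {a : E} (ha : a ∈ P) : t • a ∈ P := by
  have := hP.2.2.2.1 a ha a ha t 0 ht le_rfl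
  simpa using this

lemma IsCone.interior_add_mem {E : Type*} [NormedAddCommGroup E] [NormedSpace ℝ E]
    {P : Set E} (hP : IsCone P) {a b : E} (ha : a ∈ interior P) (hb : b ∈ P) :
    a + b ∈ interior P := by
  have hopen : IsOpen (interior P + ({b} : Set E)) := isOpen_interior.add_right
  have hsub : interior P + ({b} : Set E) ⊆ P := by
    rintro z ⟨p, hp, q, hq, rfl⟩
    rcases hq with rfl
    exact hP.add_mem' (interior_subset hp) hb
  exact interior_maximal hsub hopen (Set.add_mem_add ha rfl)

lemma IsCone.smul_interior_mem {E : Type*} [NormedAddCommGroup E] [NormedSpace ℝ E]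
    {P : Set E} (hP : IsCone P) {t : ℝ} (ht : 0 < t) {a : E} (ha : a ∈ interior P) :
    t • a ∈ interior P := by
  have h1 : t • a ∈ t • interior P := ⟨a, ha, rfl⟩
  rw [← interior_smul₀ ht.ne'] at h1
  refine interior_mono ?_ h1
  rintro z ⟨x, hx, rfl⟩
  exact hP.smul_mem' ht.le hx

theorem bwdArithConvFunSeq_limit {E E' X Y : Type*}
    [NormedAddCommGroup E] [NormedSpace ℝ E] [CompleteSpace E]
    [NormedAddCommGroup E'] [NormedSpace ℝ E'] [CompleteSpace E']
    (P : Set E) (P' : Set E')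
    (hP : IsCone P) (hP' : IsCone P')
    (hPint : (interior P).Nonempty) (hP'int : (interior P').Nonempty)
    (dX : X → X → E) (dY : Y → Y → E')
    (hdX : IsQuasiConeMetric P dX) (hdY : IsQuasiConeMetric P' dY)
    (fn : ℕ+ → X → Y) (hfn : BwdArithConvFunSeq P' dY fn)
    (x₀ : X) (y : ℕ+ → Y)
    (happrox : ∀ u : E, coneLT P 0 u → ∃ x : X, coneLT P (dX x₀ x) u)
    (hlim : ∀ n : ℕ+, ∀ u' : E', coneLT P' 0 u' → ∃ u : E, coneLT P 0 u ∧
      ∀ x : X, coneLT P (dX x₀ x) u →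
        coneLT P' (dY (y n) (fn n x)) u' ∧ coneLT P' (dY (fn n x) (y n)) u') :
    BackwardArithConv P' dY y := by
  intro u' hu'
  have hu'mem : u' ∈ interior P' := by simpa [coneLT] using hu'
  set v : E' := (3⁻¹ : ℝ) • u' with hv_def
  have hv : v ∈ interior P' := hP'.smul_interior_mem (by norm_num) hu'mem
  have hv' : coneLT P' 0 v := by simpa [coneLT] using hv
  obtain ⟨n₀, hn₀⟩ := hfn v hv'
  refine ⟨n₀, fun n m hnm => ?_⟩
  set g := PNat.gcd n m with hg
  obtain ⟨u1, hu1, h1⟩ := hlim n v hv'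
  obtain ⟨u2, hu2, h2⟩ := hlim g v hv'
  obtain ⟨e, he⟩ := hPint
  have hu1mem : u1 ∈ interior P := by simpa [coneLT] using hu1
  have hu2mem : u2 ∈ interior P := by simpa [coneLT] using hu2
  -- find small ε with u1 - ε•e, u2 - ε•e ∈ interior P
  have hc1 : ContinuousAt (fun t : ℝ => u1 - t • e) 0 := by fun_prop
  have hc2 : ContinuousAt (fun t : ℝ => u2 - t • e) 0 := by fun_prop
  have hev1 : ∀ᶠ t in nhds (0 : ℝ), u1 - t • e ∈ interior P :=
    hc1.eventually_mem (isOpen_interior.mem_nhds (by simpa using hu1mem))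
  have hev2 : ∀ᶠ t in nhds (0 : ℝ), u2 - t • e ∈ interior P :=
    hc2.eventually_mem (isOpen_interior.mem_nhds (by simpa using hu2mem))
  have hev : ∀ᶠ t in nhdsWithin (0 : ℝ) (Set.Ioi 0),
      (u1 - t • e ∈ interior P ∧ u2 - t • e ∈ interior P) ∧ 0 < t :=
    (((hev1.and hev2).filter_mono nhdsWithin_le_nhds).and self_mem_nhdsWithin)
  obtain ⟨ε, ⟨hε1, hε2⟩, hεpos⟩ := hev.exists
  have hεe : coneLT P 0 (ε • e) := by
    simpa [coneLT] using hP.smul_interior_mem hεpos he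
  obtain ⟨x, hx⟩ := happrox (ε • e) hεe
  have hxP : ε • e - dX x₀ x ∈ interior P := hx
  have hx1 : coneLT P (dX x₀ x) u1 := by
    have : (u1 - ε • e) + (ε • e - dX x₀ x) ∈ interior P :=
      hP.interior_add_mem hε1 (interior_subset hxP)
    simpa [coneLT, sub_add_sub_cancel] using this
  have hx2 : coneLT P (dX x₀ x) u2 := by
    have : (u2 - ε • e) + (ε • e - dX x₀ x) ∈ interior P :=
      hP.interior_add_mem hε2 (interior_subset hxP)
    simpa [coneLT, sub_add_sub_cancel] using this
  have hA : v - dY (y n) (fn n x) ∈ interior P' := (h1 x hx1).1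
  have hB : v - dY (fn n x) (fn g x) ∈ interior P' := hn₀ x n m hnm
  have hC : v - dY (fn g x) (y g) ∈ interior P' := (h2 x hx2).2
  have tri1 : (dY (y n) (fn n x) + dY (fn n x) (y g)) - dY (y n) (y g) ∈ P' :=
    hdY.2.2 (y n) (y g) (fn n x)
  have tri2 : (dY (fn n x) (fn g x) + dY (fn g x) (y g)) - dY (fn n x) (y g) ∈ P' :=
    hdY.2.2 (fn n x) (y g) (fn g x)
  have hsumP : ((dY (y n) (fn n x) + dY (fn n x) (y g)) - dY (y n) (y g))
      + ((dY (fn n x) (fn g x) + dY (fn g x) (y g)) - dY (fn n x) (y g)) ∈ P' :=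
    hP'.add_mem' tri1 tri2
  have hkey : u' - dY (y n) (y g) =
      ((v - dY (y n) (fn n x)) + (v - dY (fn n x) (fn g x)) + (v - dY (fn g x) (y g)))
      + (((dY (y n) (fn n x) + dY (fn n x) (y g)) - dY (y n) (y g))
        + ((dY (fn n x) (fn g x) + dY (fn g x) (y g)) - dY (fn n x) (y g))) := by
    rw [hv_def]; module
  have hInt : ((v - dY (y n) (fn n x)) + (v - dY (fn n x) (fn g x)) + (v - dY (fn g x) (y g)))
      ∈ interior P' :=
    hP'.interior_add_mem (hP'.interior_add_mem hA (interior_subset hB)) (interior_subset hC)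
  show u' - dY (y n) (y g) ∈ interior P'
  rw [hkey]
  exact hP'.interior_add_mem hInt hsumP
end

section
/- Let (X, d_X) be a quasi cone metric space over (E, P) and (Y, d_Y) a quasi cone metric space over (E', P'). If B ⊆ X is forward arithmetic compact and f : X → Y is arithmetic ff-continuous, then the image f(B) is forward arithmetic compact in Y. -/
open Pointwise

theorem image_forwardArithCompact {E E' X Y : Type*}
    [NormedAddCommGroup E] [NormedSpace ℝ E] [CompleteSpace E]
    [NormedAddCommGroup E'] [NormedSpace ℝ E'] [CompleteSpace E']
    (P : Set E) (P' : Set E')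
    (hP : IsCone P) (hP' : IsCone P')
    (hPint : (interior P).Nonempty) (hP'int : (interior P').Nonempty)
    (dX : X → X → E) (dY : Y → Y → E')
    (hdX : IsQuasiConeMetric P dX) (hdY : IsQuasiConeMetric P' dY)
    (B : Set X) (hB : ForwardArithCompact P dX B)
    (f : X → Y) (hf : ArithFFContinuous P P' dX dY f) :
    ForwardArithCompact P' dY (f '' B) := by
  intro y hy
  choose x hxB hfx using hy
  obtain ⟨φ, hφ, hconv⟩ := hB x hxB
  refine ⟨φ, hφ, ?_⟩
  have := hf (fun n => x (φ n)) hconv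
  simpa [hfx] using this
end
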